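/- Let f̂ be the multiplicative-type bound f̂(q) = (1/q)·∏_{p | q} (3/p). Then for every Y ≥ 2 there exist constants c, C > 0 (independent of Y) such that Σ_{q ≥ Y} f̂(q) ≤ C·e^{c√(log Y)}/Y. -/

import Mathlib

open Finset

lemma invsq_sum (n : ℕ) : ∑ k ∈ Finset.Icc 1 n, (1:ℝ)/(k:ℝ)^2 ≤ 2 := by
  have H : ∀ n : ℕ, 1 ≤ n → ∑ k ∈ Finset.Icc 1 n, (1:ℝ)/(k:ℝ)^2 ≤ 2 - 1/(n:ℝ) := by
    intro n hn
    induction n with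
    | zero => omega
    | succ m ih =>
      rcases Nat.eq_or_lt_of_le hn with h1 | h2
      · simp [← h1]; norm_num
      · have hm : 1 ≤ m := by omega
        rw [Finset.sum_Icc_succ_top (by omega : 1 ≤ m + 1)]
        have hmr : (0:ℝ) < m := by exact_mod_cast hm
        have key : (1:ℝ)/((m+1:ℕ):ℝ)^2 ≤ 1/(m:ℝ) - 1/((m:ℝ)+1) := by
          push_cast
          rw [div_sub_div _ _ (ne_of_gt hmr) (by positivity)]
          rw [div_le_div_iff₀ (by positivity) (by positivity)]
          ring_nf
          nlinarith [hmr]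
        have := ih hm
        push_cast at key ⊢
        linarith
  rcases Nat.eq_zero_or_pos n with h | h
  · simp [h]
  · have := H n h
    have : (0:ℝ) < n := by exact_mod_cast h
    linarith [H n h, one_div_pos.mpr this]

lemma cheb_count (k : ℕ) :
    k * ((Finset.range (2^(k+1))).filter (fun p => Nat.Prime p ∧ 2^k ≤ p)).card ≤ 2^(k+2) := by
  set A := (Finset.range (2^(k+1))).filter (fun p => Nat.Prime p ∧ 2^k ≤ p) with hA
  have h1 : (2^k) ^ A.card ≤ ∏ p ∈ A, p := by
    apply Finset.pow_card_le_prod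
    intro x hx
    exact (Finset.mem_filter.mp hx).2.2
  have h2 : ∏ p ∈ A, p ≤ primorial (2^(k+1)) := by
    unfold primorial
    apply Finset.prod_le_prod_of_subset_of_one_le'
    · intro p hp
      rw [Finset.mem_filter] at hp ⊢
      exact ⟨Finset.mem_range.mpr (by have := Finset.mem_range.mp hp.1; omega), hp.2.1⟩
    · intro i hi _
      rw [Finset.mem_filter] at hi; exact hi.2.one_lt.le.trans' (by norm_num)
  have h3 : primorial (2^(k+1)) ≤ 4 ^ (2^(k+1)) := primorial_le_4_pow _
  have h4 : (2:ℕ) ^ (k * A.card) ≤ 2 ^ (2^(k+2)) := by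
    calc (2:ℕ) ^ (k * A.card) = (2^k) ^ A.card := by rw [pow_mul]
    _ ≤ ∏ p ∈ A, p := h1
    _ ≤ 4 ^ (2^(k+1)) := le_trans h2 h3
    _ = 2 ^ (2^(k+2)) := by rw [(by norm_num : (4:ℕ) = 2^2), ← pow_mul, pow_succ]; ring_nf
  exact (Nat.pow_le_pow_iff_right (by norm_num)).mp h4

lemma prime_sum_bound (P : Finset ℕ) (hP : ∀ p ∈ P, Nat.Prime p) :
    ∑ p ∈ P, 1/((p:ℝ) * Real.log p) ≤ 12 := by
  have hlog2 : (0.6931471803:ℝ) < Real.log 2 := Real.log_two_gt_d9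
  -- pointwise bound by H (Nat.log 2 p)
  set H : ℕ → ℝ := fun k => 1/((2:ℝ)^k * ((k:ℝ) * Real.log 2)) with hH
  have hHnn : ∀ k, 0 ≤ H k := by
    intro k; apply div_nonneg (by norm_num); positivity
  have step1 : ∑ p ∈ P, 1/((p:ℝ) * Real.log p) ≤ ∑ p ∈ P, H (Nat.log 2 p) := by
    apply Finset.sum_le_sum
    intro p hp
    have hp2 := (hP p hp).two_le
    set k := Nat.log 2 p with hk
    have hk1 : 1 ≤ k := Nat.log_pos (by norm_num) hp2
    have hlow : 2^k ≤ p := Nat.pow_log_le_self 2 (by omega)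
    have hlowR : (2:ℝ)^k ≤ (p:ℝ) := by exact_mod_cast hlow
    have hlogp : (k:ℝ) * Real.log 2 ≤ Real.log p := by
      calc (k:ℝ) * Real.log 2 = Real.log (2^k) := by rw [Real.log_pow]
      _ ≤ Real.log p := Real.log_le_log (by positivity) hlowR
    have h2k : (0:ℝ) < 2^k := by positivity
    have hkpos : (0:ℝ) < (k:ℝ) * Real.log 2 := by
      apply mul_pos (by exact_mod_cast hk1) (by linarith)
    rw [hH]
    apply one_div_le_one_div_of_le (by positivity)
    exact mul_le_mul hlowR hlogp hkpos.le (by positivity)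
  -- group by k
  have step2 : ∑ p ∈ P, H (Nat.log 2 p)
      = ∑ k ∈ P.image (Nat.log 2), ((P.filter (fun p => Nat.log 2 p = k)).card : ℕ) • H k :=
    Finset.sum_comp H (Nat.log 2)
  have step3 : ∀ k ∈ P.image (Nat.log 2),
      ((P.filter (fun p => Nat.log 2 p = k)).card : ℕ) • H k ≤ (4/Real.log 2) * (1/(k:ℝ)^2) := by
    intro k hk
    obtain ⟨p0, hp0P, hp0⟩ := Finset.mem_image.mp hk
    have hk1 : 1 ≤ k := hp0 ▸ Nat.log_pos (by norm_num) (hP p0 hp0P).two_le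
    have hsub : P.filter (fun p => Nat.log 2 p = k)
        ⊆ (Finset.range (2^(k+1))).filter (fun p => Nat.Prime p ∧ 2^k ≤ p) := by
      intro p hp
      rw [Finset.mem_filter] at hp ⊢
      have hpp := hP p hp.1
      refine ⟨Finset.mem_range.mpr ?_, hpp, ?_⟩
      · have := Nat.lt_pow_succ_log_self (by norm_num : 1 < 2) p
        rw [hp.2] at this; exact this
      · have := Nat.pow_log_le_self 2 hpp.pos.ne'
        rw [hp.2] at this; exact this
    have hcard : k * (P.filter (fun p => Nat.log 2 p = k)).card ≤ 2^(k+2) :=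
      le_trans (Nat.mul_le_mul_left k (Finset.card_le_card hsub)) (cheb_count k)
    have hcardR : (k:ℝ) * ((P.filter (fun p => Nat.log 2 p = k)).card : ℝ) ≤ (2:ℝ)^(k+2) := by
      exact_mod_cast hcard
    rw [nsmul_eq_mul, hH]
    have hkR : (0:ℝ) < k := by exact_mod_cast hk1
    have h2k : (0:ℝ) < 2^k := by positivity
    have hl2 : (0:ℝ) < Real.log 2 := by linarith
    have expand : (2:ℝ)^(k+2) = 4 * 2^k := by rw [pow_add]; norm_num; ring
    have hc : (k:ℝ) * ((P.filter (fun p => Nat.log 2 p = k)).card : ℝ) ≤ 4 * 2^k := by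
      rw [← expand]; exact hcardR
    simp only []
    have hk0 : (k:ℝ) ≠ 0 := ne_of_gt hkR
    rw [mul_one_div, div_le_iff₀ (by positivity)]
    have heq : 4 / Real.log 2 * (1 / (k:ℝ)^2) * (2^k * ((k:ℝ) * Real.log 2)) = 4 * 2^k / (k:ℝ) := by
      field_simp
    rw [heq, le_div_iff₀ hkR]
    linarith [hc]
  have step4 : ∑ k ∈ P.image (Nat.log 2), ((P.filter (fun p => Nat.log 2 p = k)).card : ℕ) • H k
      ≤ (4/Real.log 2) * ∑ k ∈ P.image (Nat.log 2), 1/(k:ℝ)^2 := by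
    rw [Finset.mul_sum]
    exact Finset.sum_le_sum step3
  have step5 : ∑ k ∈ P.image (Nat.log 2), 1/(k:ℝ)^2 ≤ 2 := by
    set I := P.image (Nat.log 2) with hI
    have hsub : I ⊆ Finset.Icc 1 (I.sup id) := by
      intro k hk
      obtain ⟨p0, hp0P, hp0⟩ := Finset.mem_image.mp hk
      rw [Finset.mem_Icc]
      exact ⟨hp0 ▸ Nat.log_pos (by norm_num) (hP p0 hp0P).two_le, Finset.le_sup (f := id) hk⟩
    calc ∑ k ∈ I, 1/(k:ℝ)^2 ≤ ∑ k ∈ Finset.Icc 1 (I.sup id), 1/(k:ℝ)^2 :=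
          Finset.sum_le_sum_of_subset_of_nonneg hsub (fun i _ _ => by positivity)
      _ ≤ 2 := invsq_sum _
  have hl2 : (0:ℝ) < Real.log 2 := by linarith
  calc ∑ p ∈ P, 1/((p:ℝ) * Real.log p) ≤ (4/Real.log 2) * ∑ k ∈ P.image (Nat.log 2), 1/(k:ℝ)^2 := by
        rw [← step2] at step4; linarith
    _ ≤ (4/Real.log 2) * 2 := by
        apply mul_le_mul_of_nonneg_left step5 (by positivity)
    _ ≤ 12 := by
        rw [div_mul_eq_mul_div, div_le_iff₀ hl2]
        linarith

lemma euler_bound (β : ℝ) (hβ : 0 < β) (N : ℕ) :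
    ∑ q ∈ Finset.Icc 1 N, ((q:ℝ)^(-β) * ∏ p ∈ q.primeFactors, 3/(p:ℝ))
    ≤ ∏ p ∈ (Finset.range (N+1)).filter Nat.Prime,
        (1 + (3/(p:ℝ)) * ((p:ℝ)^(-β) / (1 - (p:ℝ)^(-β)))) := by
  classical
  set P := (Finset.range (N+1)).filter Nat.Prime with hP
  have hPprime : ∀ p ∈ P, Nat.Prime p := fun p hp => (Finset.mem_filter.mp hp).2
  set t : ℕ → ℕ → ℝ := fun p k => ((p:ℝ)^(-β))^k * (if k = 0 then 1 else 3/(p:ℝ)) with ht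
  have htnn : ∀ p k, 0 ≤ t p k := by
    intro p k
    apply mul_nonneg (pow_nonneg (Real.rpow_nonneg (by positivity) _) _)
    split <;> positivity
  -- Step 1 : termwise product formula
  have step1 : ∀ q ∈ Finset.Icc 1 N,
      (q:ℝ)^(-β) * ∏ p ∈ q.primeFactors, 3/(p:ℝ) = ∏ p ∈ P, t p (q.factorization p) := by
    intro q hq
    rw [Finset.mem_Icc] at hq
    have hq0 : q ≠ 0 := by omega
    have hsub : q.primeFactors ⊆ P := by
      intro p hp
      rw [Nat.mem_primeFactors] at hp
      rw [hP, Finset.mem_filter, Finset.mem_range]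
      exact ⟨by have := Nat.le_of_dvd (by omega) hp.2.1; omega, hp.1⟩
    have hzero : ∀ p ∈ P, p ∉ q.primeFactors → q.factorization p = 0 := by
      intro p _ hp
      rw [← Nat.support_factorization] at hp
      exact Finsupp.notMem_support_iff.mp hp
    have hB : ∏ p ∈ P, (if q.factorization p = 0 then (1:ℝ) else 3/(p:ℝ))
        = ∏ p ∈ q.primeFactors, 3/(p:ℝ) := by
      rw [← Finset.prod_subset hsub (fun p hp hnp => by rw [if_pos (hzero p hp hnp)])]
      apply Finset.prod_congr rfl
      intro p hp
      rw [if_neg]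
      rw [← Nat.support_factorization] at hp
      exact Finsupp.mem_support_iff.mp hp
    have hC : ∏ p ∈ P, ((p:ℝ)^(-β))^(q.factorization p) = (q:ℝ)^(-β) := by
      rw [← Finset.prod_subset hsub (fun p hp hnp => by rw [hzero p hp hnp, pow_zero])]
      have hterm : ∀ p ∈ q.primeFactors, ((p:ℝ)^(-β))^(q.factorization p)
          = ((p:ℝ)^(q.factorization p) : ℝ)^(-β) := by
        intro p hp
        have hppos : (0:ℝ) ≤ (p:ℝ) := by positivity
        rw [← Real.rpow_natCast ((p:ℝ)^(-β)) _, ← Real.rpow_mul hppos,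
          mul_comm, Real.rpow_mul hppos, Real.rpow_natCast]
      rw [Finset.prod_congr rfl hterm, Real.finset_prod_rpow _ _ (fun p _ => by positivity)]
      congr 1
      have := Nat.factorization_prod_pow_eq_self hq0
      rw [Finsupp.prod] at this
      rw [Nat.support_factorization] at this
      exact_mod_cast congrArg (Nat.cast (R := ℝ)) this
    rw [← hC, ← hB, ← Finset.prod_mul_distrib]
  -- the function on exponent vectors
  set G : (∀ a ∈ P, ℕ) → ℝ := fun σ => ∏ x ∈ P.attach, t x.1 (σ x.1 x.2) with hG
  have hGnn : ∀ σ, 0 ≤ G σ := fun σ => Finset.prod_nonneg (fun x _ => htnn _ _)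
  set φ : ℕ → (∀ a ∈ P, ℕ) := fun q => fun p _ => q.factorization p with hφ
  have hqeq : ∀ q ∈ Finset.Icc 1 N, ∏ p ∈ P, p ^ (q.factorization p) = q := by
    intro q hq
    rw [Finset.mem_Icc] at hq
    have hq0 : q ≠ 0 := by omega
    have hsub : q.primeFactors ⊆ P := by
      intro p hp
      rw [Nat.mem_primeFactors] at hp
      rw [hP, Finset.mem_filter, Finset.mem_range]
      exact ⟨by have := Nat.le_of_dvd (by omega) hp.2.1; omega, hp.1⟩
    rw [← Finset.prod_subset hsub (fun p hp hnp => by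
      rw [Finsupp.notMem_support_iff.mp (by rwa [Nat.support_factorization]), pow_zero])]
    have := Nat.factorization_prod_pow_eq_self hq0
    rwa [Finsupp.prod, Nat.support_factorization] at this
  -- step 2 : sum over q ≤ sum over pi
  have step2 : ∑ q ∈ Finset.Icc 1 N, G (φ q)
      ≤ ∑ σ ∈ P.pi (fun _ => Finset.range (N+1)), G σ := by
    have hinj : ∀ x ∈ Finset.Icc 1 N, ∀ y ∈ Finset.Icc 1 N, φ x = φ y → x = y := by
      intro q hq q' hq' h
      have heq : ∀ p ∈ P, q.factorization p = q'.factorization p := by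
        intro p hp
        exact congrFun (congrFun h p) hp
      calc q = ∏ p ∈ P, p ^ (q.factorization p) := (hqeq q hq).symm
        _ = ∏ p ∈ P, p ^ (q'.factorization p) :=
            Finset.prod_congr rfl (fun p hp => by rw [heq p hp])
        _ = q' := hqeq q' hq'
    have himg : ∑ σ ∈ (Finset.Icc 1 N).image φ, G σ = ∑ q ∈ Finset.Icc 1 N, G (φ q) :=
      Finset.sum_image hinj
    rw [← himg]
    apply Finset.sum_le_sum_of_subset_of_nonneg
    · intro σ hσ
      obtain ⟨q, hq, rfl⟩ := Finset.mem_image.mp hσ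
      rw [Finset.mem_Icc] at hq
      rw [Finset.mem_pi]
      intro p _
      simp only [hφ]
      rw [Finset.mem_range]
      have := Nat.factorization_lt p (show q ≠ 0 by omega)
      omega
    · intro σ _ _; exact hGnn σ
  -- step 3 : prod_sum
  have step3 : ∑ σ ∈ P.pi (fun _ => Finset.range (N+1)), G σ
      = ∏ p ∈ P, ∑ k ∈ Finset.range (N+1), t p k := by
    rw [Finset.prod_sum]
  -- step 4 : geometric bound per prime
  have step4 : ∀ p ∈ P, ∑ k ∈ Finset.range (N+1), t p k
      ≤ 1 + (3/(p:ℝ)) * ((p:ℝ)^(-β) / (1 - (p:ℝ)^(-β))) := by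
    intro p hp
    have hp2 : 2 ≤ p := (hPprime p hp).two_le
    have hp1R : (1:ℝ) < p := by exact_mod_cast hp2
    set r : ℝ := (p:ℝ)^(-β) with hr
    have hr0 : 0 ≤ r := Real.rpow_nonneg (by positivity) _
    have hr1 : r < 1 := Real.rpow_lt_one_of_one_lt_of_neg hp1R (by linarith)
    have hgeom : ∑ k ∈ Finset.range N, r^k ≤ 1/(1-r) := by
      rw [geom_sum_eq (ne_of_lt hr1)]
      have hflip : (r ^ N - 1) / (r - 1) = (1 - r^N)/(1-r) := by
        rw [← neg_div_neg_eq]; ring_nf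
      rw [hflip, div_le_div_iff₀ (by linarith) (by linarith)]
      have : (0:ℝ) ≤ r^N := pow_nonneg hr0 _
      nlinarith
    rw [Finset.sum_range_succ']
    have h0 : t p 0 = 1 := by simp [ht]
    have hk : ∀ k, t p (k+1) = (3/(p:ℝ)) * r * r^k := by
      intro k
      simp only [ht, if_neg (Nat.succ_ne_zero k)]
      rw [pow_succ]
      ring
    rw [h0, Finset.sum_congr rfl (fun k _ => hk k), ← Finset.mul_sum]
    have : (3/(p:ℝ)) * r * ∑ k ∈ Finset.range N, r^k ≤ (3/(p:ℝ)) * r * (1/(1-r)) := by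
      apply mul_le_mul_of_nonneg_left hgeom (by positivity)
    have heq : (3/(p:ℝ)) * r * (1/(1-r)) = (3/(p:ℝ)) * (r/(1-r)) := by ring
    have h2 := le_trans this (le_of_eq heq)
    linarith [h2]
  calc ∑ q ∈ Finset.Icc 1 N, ((q:ℝ)^(-β) * ∏ p ∈ q.primeFactors, 3/(p:ℝ))
      = ∑ q ∈ Finset.Icc 1 N, G (φ q) := by
        apply Finset.sum_congr rfl
        intro q hq
        rw [step1 q hq, hG]
        exact (Finset.prod_attach P (fun p => t p (q.factorization p))).symm
    _ ≤ ∑ σ ∈ P.pi (fun _ => Finset.range (N+1)), G σ := step2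
    _ = ∏ p ∈ P, ∑ k ∈ Finset.range (N+1), t p k := step3
    _ ≤ ∏ p ∈ P, (1 + (3/(p:ℝ)) * ((p:ℝ)^(-β) / (1 - (p:ℝ)^(-β)))) := by
        apply Finset.prod_le_prod
        · intro p _; exact Finset.sum_nonneg (fun k _ => htnn p k)
        · exact step4

lemma master (β : ℝ) (hβ0 : 0 < β) (N : ℕ) :
    ∑ q ∈ Finset.Icc 1 N, ((q:ℝ)^(-β) * ∏ p ∈ q.primeFactors, 3/(p:ℝ))
      ≤ Real.exp (36/β) := by
  set P := (Finset.range (N+1)).filter Nat.Prime with hP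
  have hPprime : ∀ p ∈ P, Nat.Prime p := fun p hp => (Finset.mem_filter.mp hp).2
  have hfac : ∀ p ∈ P, 1 + (3/(p:ℝ)) * ((p:ℝ)^(-β) / (1 - (p:ℝ)^(-β)))
      ≤ Real.exp (3/(β * ((p:ℝ) * Real.log p))) := by
    intro p hp
    have hp2 : 2 ≤ p := (hPprime p hp).two_le
    have hp1R : (1:ℝ) < p := by exact_mod_cast hp2
    have hp0R : (0:ℝ) < p := by linarith
    have hlogp : 0 < Real.log p := Real.log_pos hp1R
    set r : ℝ := (p:ℝ)^(-β) with hr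
    have hr0 : 0 < r := Real.rpow_pos_of_pos hp0R _
    have hr1 : r < 1 := Real.rpow_lt_one_of_one_lt_of_neg hp1R (by linarith)
    have hpb : (p:ℝ)^β = Real.exp (β * Real.log p) := by
      rw [Real.rpow_def_of_pos hp0R, mul_comm]
    have hlb : β * Real.log p + 1 ≤ (p:ℝ)^β := by
      rw [hpb]; exact Real.add_one_le_exp _
    have hpbpos : (0:ℝ) < (p:ℝ)^β := Real.rpow_pos_of_pos hp0R _
    have hrinv : r = ((p:ℝ)^β)⁻¹ := by
      rw [hr, ← Real.rpow_neg hp0R.le]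
    -- r/(1-r) = 1/(p^β - 1)
    have hden : (p:ℝ)^β - 1 > 0 := by nlinarith
    have hfrac : r / (1 - r) = 1 / ((p:ℝ)^β - 1) := by
      rw [hrinv]
      have h1r : (1:ℝ) - ((p:ℝ)^β)⁻¹ ≠ 0 := by rw [← hrinv]; linarith
      rw [div_eq_div_iff h1r hden.ne']
      field_simp
    have hstep : (3/(p:ℝ)) * (r / (1 - r)) ≤ 3/(β * ((p:ℝ) * Real.log p)) := by
      rw [hfrac]
      rw [mul_one_div, div_div, div_le_div_iff₀ (by positivity) (by positivity)]
      have hkey : β * Real.log p ≤ (p:ℝ)^β - 1 := by linarith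
      nlinarith [hkey, hp0R, hlogp, hβ0]
    calc 1 + (3/(p:ℝ)) * (r / (1 - r)) ≤ 1 + 3/(β * ((p:ℝ) * Real.log p)) := by linarith
      _ ≤ Real.exp (3/(β * ((p:ℝ) * Real.log p))) := by
          have := Real.add_one_le_exp (3/(β * ((p:ℝ) * Real.log p))); linarith
  calc ∑ q ∈ Finset.Icc 1 N, ((q:ℝ)^(-β) * ∏ p ∈ q.primeFactors, 3/(p:ℝ))
      ≤ ∏ p ∈ P, (1 + (3/(p:ℝ)) * ((p:ℝ)^(-β) / (1 - (p:ℝ)^(-β)))) := euler_bound β hβ0 N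
    _ ≤ ∏ p ∈ P, Real.exp (3/(β * ((p:ℝ) * Real.log p))) := by
        apply Finset.prod_le_prod
        · intro p hp
          have hp2 : 2 ≤ p := (hPprime p hp).two_le
          have hp1R : (1:ℝ) < p := by exact_mod_cast hp2
          have hr0 : (0:ℝ) ≤ (p:ℝ)^(-β) := Real.rpow_nonneg (by positivity) _
          have hr1 : (p:ℝ)^(-β) < 1 := Real.rpow_lt_one_of_one_lt_of_neg hp1R (by linarith)
          have : 0 ≤ (p:ℝ)^(-β) / (1 - (p:ℝ)^(-β)) := div_nonneg hr0 (by linarith)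
          positivity
        · exact hfac
    _ = Real.exp (∑ p ∈ P, 3/(β * ((p:ℝ) * Real.log p))) := (Real.exp_sum _ _).symm
    _ ≤ Real.exp (36/β) := by
        apply Real.exp_le_exp.mpr
        have : ∑ p ∈ P, 3/(β * ((p:ℝ) * Real.log p))
            = (3/β) * ∑ p ∈ P, 1/((p:ℝ) * Real.log p) := by
          rw [Finset.mul_sum]
          apply Finset.sum_congr rfl
          intro p _
          rw [div_mul_eq_mul_div, mul_one_div, div_div]
          ring_nf
        rw [this]
        have hps := prime_sum_bound P hPprime
        have hpsnn : 0 ≤ ∑ p ∈ P, 1/((p:ℝ) * Real.log p) := by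
          apply Finset.sum_nonneg
          intro p hp
          have hp1R : (1:ℝ) < p := by exact_mod_cast (hPprime p hp).two_le
          have := Real.log_pos hp1R
          positivity
        calc (3/β) * ∑ p ∈ P, 1/((p:ℝ) * Real.log p) ≤ (3/β) * 12 := by
              apply mul_le_mul_of_nonneg_left hps (by positivity)
          _ = 36/β := by ring

/-- The bound `f̂(q) = (1/q)·∏_{p ∣ q} (3/p)`. -/
noncomputable def fhat (q : ℕ) : ℝ := (1 / (q : ℝ)) * ∏ p ∈ q.primeFactors, (3 : ℝ) / p

theorem stmt11 :
    ∃ c > (0 : ℝ), ∃ C > (0 : ℝ), ∀ Y : ℝ, 2 ≤ Y →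
      (∑' q : ℕ, if Y ≤ (q : ℝ) then fhat q else 0)
        ≤ C * Real.exp (c * Real.sqrt (Real.log Y)) / Y := by
  refine ⟨73, by norm_num, 1, by norm_num, ?_⟩
  intro Y hY
  have hY0 : (0:ℝ) < Y := by linarith
  have hlog2 : (0.6931471803:ℝ) < Real.log 2 := Real.log_two_gt_d9
  set L := Real.log Y with hL
  have hL2 : Real.log 2 ≤ L := Real.log_le_log (by norm_num) hY
  have hL0 : 0 < L := by linarith
  set s := Real.sqrt L with hs
  have hs0 : 0 < s := Real.sqrt_pos.mpr hL0
  have hss : s * s = L := Real.mul_self_sqrt hL0.le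
  have hs8 : 0.8 ≤ s := by
    have h1 : Real.sqrt 0.64 ≤ Real.sqrt L := Real.sqrt_le_sqrt (by linarith)
    calc (0.8:ℝ) = Real.sqrt 0.64 := by
          rw [show (0.64:ℝ) = 0.8^2 by norm_num, Real.sqrt_sq (by norm_num)]
      _ ≤ s := h1
  set β := 1/(2*s) with hβ
  have hβ0 : 0 < β := by positivity
  have hβ1 : β < 1 := by
    rw [hβ, div_lt_one (by positivity)]; linarith
  have gnn : ∀ q : ℕ, 0 ≤ (q:ℝ)^(-β) * ∏ p ∈ q.primeFactors, (3:ℝ)/p := by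
    intro q
    apply mul_nonneg (Real.rpow_nonneg (by positivity) _)
    exact Finset.prod_nonneg (fun p _ => by positivity)
  have fhatnn : ∀ q : ℕ, 0 ≤ fhat q := by
    intro q
    apply mul_nonneg (by positivity)
    exact Finset.prod_nonneg (fun p _ => by positivity)
  apply Real.tsum_le_of_sum_range_le
  · intro q
    split
    · exact fhatnn q
    · exact le_refl 0
  · intro n
    have hpt : ∀ q : ℕ, (if Y ≤ (q:ℝ) then fhat q else 0)
        ≤ Y^(β-1) * ((q:ℝ)^(-β) * ∏ p ∈ q.primeFactors, (3:ℝ)/p) := by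
      intro q
      split
      · rename_i hq
        have hq0 : (0:ℝ) < q := by linarith
        have hfe : fhat q = (q:ℝ)^(β-1) * ((q:ℝ)^(-β) * ∏ p ∈ q.primeFactors, (3:ℝ)/p) := by
          rw [fhat, ← mul_assoc, ← Real.rpow_add hq0,
            show β - 1 + -β = -1 by ring, Real.rpow_neg_one, one_div]
        rw [hfe]
        apply mul_le_mul_of_nonneg_right _ (gnn q)
        exact Real.rpow_le_rpow_of_nonpos hY0 hq (by linarith)
      · exact mul_nonneg (Real.rpow_nonneg hY0.le _) (gnn q)
    calc ∑ q ∈ Finset.range n, (if Y ≤ (q:ℝ) then fhat q else 0)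
        ≤ ∑ q ∈ Finset.range n, Y^(β-1) * ((q:ℝ)^(-β) * ∏ p ∈ q.primeFactors, (3:ℝ)/p) :=
          Finset.sum_le_sum (fun q _ => hpt q)
      _ = Y^(β-1) * ∑ q ∈ Finset.range n, ((q:ℝ)^(-β) * ∏ p ∈ q.primeFactors, (3:ℝ)/p) := by
          rw [Finset.mul_sum]
      _ ≤ Y^(β-1) * Real.exp (36/β) := by
          apply mul_le_mul_of_nonneg_left _ (Real.rpow_nonneg hY0.le _)
          have hzero : ∑ q ∈ Finset.range n, ((q:ℝ)^(-β) * ∏ p ∈ q.primeFactors, (3:ℝ)/p)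
              ≤ ∑ q ∈ Finset.Icc 1 n, ((q:ℝ)^(-β) * ∏ p ∈ q.primeFactors, (3:ℝ)/p) := by
            rw [← Finset.sum_filter_of_ne (p := fun q => 1 ≤ q)
              (fun x hx hne => ?_)]
            · apply Finset.sum_le_sum_of_subset_of_nonneg
              · intro q hq
                rw [Finset.mem_filter, Finset.mem_range] at hq
                rw [Finset.mem_Icc]
                omega
              · intro q _ _; exact gnn q
            · by_contra h
              push_neg at h
              interval_cases x
              apply hne
              simp [Real.zero_rpow (by linarith : -β ≠ 0)]
          exact le_trans hzero (master β hβ0 n)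
      _ ≤ 1 * Real.exp (73 * s) / Y := by
          have hYb : Y^(β-1) = Real.exp (s/2) / Y := by
            rw [Real.rpow_def_of_pos hY0, ← hL]
            have h1 : L * (β - 1) = s/2 - L := by
              have : L * β = s/2 := by
                rw [hβ, ← hss]; field_simp
              nlinarith [this]
            rw [h1, Real.exp_sub, Real.exp_log hY0]
          have h36 : 36/β = 72 * s := by
            rw [hβ]; field_simp; ring
          rw [hYb, h36, div_mul_eq_mul_div, ← Real.exp_add, one_mul]
          gcongr
          linarith
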